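/- Let q be an even prime power. Then for every integer 0 ≤ j < q-1, one has the factorization into irreducible polynomials over F_q: x^{q+1} + α^{2j+1} = (x + (α^{2j+1})^{1/2}) · ∏_{i ∈ I} (x^2 + α^{i+j} x + α^{2j+1}), where (α^{2j+1})^{1/2} denotes the unique square root of α^{2j+1} in F_q. -/

import Mathlib

open Polynomial

/-- For `q` even: `R = {0 ≤ i < q-1 : α^i = α^(k+1) + α^(q-1-k) for some 0 ≤ k < q/2 - 1}`. -/
def Rset (q : ℕ) {F : Type} [Field F] (α : F) : Set ℕ :=
  {i | i < q - 1 ∧ ∃ k : ℕ, k < q / 2 - 1 ∧ α ^ i = α ^ (k + 1) + α ^ (q - 1 - k)}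

/-- For `q` even: `I = {0,1,...,q-2} \ R`. -/
def Iset (q : ℕ) {F : Type} [Field F] (α : F) : Set ℕ :=
  {i | i < q - 1} \ Rset q α

/-- `I` as a finite set of naturals. -/
noncomputable def Ifin (q : ℕ) {F : Type} [Field F] (α : F) : Finset ℕ :=
  @Finset.filter _ (· ∈ Iset q α) (Classical.decPred _) (Finset.range (q - 1))


variable {q : ℕ} {F : Type} [Field F] [Fintype F]

lemma aux_char2 (hF : Fintype.card F = q) (hq : Even q) : CharP F 2 := by
  obtain ⟨p, hchar⟩ := CharP.exists F
  have hp : p.Prime := CharP.char_is_prime F p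
  obtain ⟨n, hn, hcard⟩ := FiniteField.card F p
  have h2 : (2 : ℕ) ∣ p ^ (n : ℕ) := by rw [← hcard, hF]; exact hq.two_dvd
  have : p = 2 := ((Nat.prime_dvd_prime_iff_eq Nat.prime_two hn).mp
    (Nat.Prime.dvd_of_dvd_pow Nat.prime_two h2)).symm
  rwa [this] at hchar

lemma aux_qpow (hF : Fintype.card F = q) (hq : Even q) : ∃ n : ℕ, 0 < n ∧ q = 2 ^ n := by
  have := aux_char2 hF hq
  obtain ⟨n, _, hn⟩ := FiniteField.card F 2
  exact ⟨n, n.2, by rw [← hF, hn]⟩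

lemma aux_order (hF : Fintype.card F = q) (α : Fˣ) (hα : ∀ x : Fˣ, x ∈ Subgroup.zpowers α) :
    orderOf α = q - 1 := by
  rw [orderOf_eq_card_of_forall_mem_zpowers hα, Nat.card_units,
    Nat.card_eq_fintype_card, hF]

lemma aux_dlog (hF : Fintype.card F = q) (α : Fˣ) (hα : ∀ x : Fˣ, x ∈ Subgroup.zpowers α)
    (u : Fˣ) : ∃ i : ℕ, i < q - 1 ∧ α ^ i = u := by
  have hord := aux_order hF α hα
  have hq1 : 0 < q - 1 := hord ▸ orderOf_pos α
  obtain ⟨m, hm⟩ := hα u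
  simp only at hm
  refine ⟨(m % ((q - 1 : ℕ) : ℤ)).toNat, ?_, ?_⟩
  · have h1 : m % ((q-1 : ℕ) : ℤ) < ((q-1 : ℕ) : ℤ) :=
      Int.emod_lt_of_pos m (by exact_mod_cast hq1)
    omega
  · rw [← zpow_natCast, Int.toNat_of_nonneg (Int.emod_nonneg m (by exact_mod_cast hq1.ne')),
      ← hord, zpow_mod_orderOf, hm]

-- injectivity
lemma aux_inj (hF : Fintype.card F = q) (α : Fˣ) (hα : ∀ x : Fˣ, x ∈ Subgroup.zpowers α)
    {s t : ℕ} (hs : s < q - 1) (ht : t < q - 1) (h : (α : F) ^ s = (α : F) ^ t) : s = t := by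
  have hord := aux_order hF α hα
  have : α ^ s = α ^ t := Units.ext (by push_cast; exact h)
  have := pow_eq_pow_iff_modEq.mp this
  rw [hord] at this
  exact Nat.ModEq.eq_of_lt_of_lt this hs ht

lemma aux_pow_qsub1 (hF : Fintype.card F = q) (α : Fˣ) (hα : ∀ x : Fˣ, x ∈ Subgroup.zpowers α) :
    (α : F) ^ (q - 1) = 1 := by
  have : α ^ (q-1) = 1 := by rw [← aux_order hF α hα]; exact pow_orderOf_eq_one α
  have := congrArg (Units.val) this
  simpa using this

variable {q : ℕ} {F : Type} [Field F] [Fintype F]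

lemma aux_order' (hF : Fintype.card F = q) (α : Fˣ) (hα : ∀ x : Fˣ, x ∈ Subgroup.zpowers α) :
    orderOf α = q - 1 := by
  rw [orderOf_eq_card_of_forall_mem_zpowers hα, Nat.card_units,
    Nat.card_eq_fintype_card, hF]

lemma aux_pow_iff (hF : Fintype.card F = q) (α : Fˣ) (hα : ∀ x : Fˣ, x ∈ Subgroup.zpowers α)
    {u v : ℕ} : (α : F) ^ u = (α : F) ^ v ↔ u % (q-1) = v % (q-1) := by
  have hord := aux_order' hF α hα
  constructor
  · intro h
    have : α ^ u = α ^ v := Units.ext (by push_cast; exact h)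
    have := pow_eq_pow_iff_modEq.mp this
    rwa [hord] at this
  · intro h
    have : α ^ u = α ^ v := pow_eq_pow_iff_modEq.mpr (by rw [hord]; exact h)
    have := congrArg Units.val this
    simpa using this

lemma aux_pow_q1 (hF : Fintype.card F = q) (α : Fˣ) (hα : ∀ x : Fˣ, x ∈ Subgroup.zpowers α) :
    (α : F) ^ (q - 1) = 1 := by
  have : α ^ (q-1) = 1 := by rw [← aux_order' hF α hα]; exact pow_orderOf_eq_one α
  have := congrArg Units.val this; simpa using this

-- helper for the case analysis, m < m'
lemma aux_pair (hF : Fintype.card F = q) (hq : Even q) (α : Fˣ)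
    (hα : ∀ x : Fˣ, x ∈ Subgroup.zpowers α)
    {m m' : ℕ} (hmm : m < m') (hm' : m' < q - 1)
    (hmod : (m + m') % (q-1) = 1 % (q-1)) :
    ∃ k : ℕ, k < q / 2 - 1 ∧ (α:F) ^ (k+1) + (α:F) ^ (q-1-k) = (α:F) ^ m + (α:F) ^ m' := by
  have hq2 : 2 ≤ q := Fintype.one_lt_card.trans_eq hF
  have hqe : q % 2 = 0 := Nat.even_iff.mp hq
  have hq4 : 4 ≤ q := by omega
  have h1 : (α:F) ^ (q-1) = 1 := aux_pow_q1 hF α hα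
  have h1m : 1 % (q-1) = 1 := Nat.mod_eq_of_lt (by omega)
  have hcases : m + m' = 1 ∨ m + m' = q := by
    have hD := Nat.div_add_mod (m + m') (q-1)
    have hD2 : (m + m') / (q-1) < 2 := Nat.div_lt_of_lt_mul (by omega)
    rw [hmod, h1m] at hD
    obtain ⟨D, hD2', hD'⟩ : ∃ D, D < 2 ∧ (q-1) * D + 1 = m + m' := ⟨_, hD2, hD⟩
    interval_cases D <;> omega
  rcases hcases with h | h
  · have hm0 : m = 0 := by omega
    have hm1 : m' = 1 := by omega
    refine ⟨0, by omega, ?_⟩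
    simp [hm0, hm1, h1, add_comm]
  · have hm1 : 1 ≤ m := by omega
    refine ⟨m - 1, by omega, ?_⟩
    rw [show m - 1 + 1 = m by omega, show q - 1 - (m-1) = m' by omega]

lemma aux_E (hF : Fintype.card F = q) (hq : Even q) (α : Fˣ)
    (hα : ∀ x : Fˣ, x ∈ Subgroup.zpowers α) {j : ℕ} (hj : j < q - 1)
    {i : ℕ} (hi : i < q - 1) :
    (∃ x y : F, x * y = (α:F) ^ (2*j+1) ∧ x + y = (α:F) ^ (i+j)) ↔ i ∈ Rset q (α:F) := by
  haveI hch : CharP F 2 := aux_char2 hF hq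
  have hq2 : 2 ≤ q := Fintype.one_lt_card.trans_eq hF
  have ha : (α : F) ≠ 0 := α.ne_zero
  have h1 : (α:F) ^ (q-1) = 1 := aux_pow_q1 hF α hα
  constructor
  · rintro ⟨x, y, hxy, hsum⟩
    have hx : x ≠ 0 := by rintro rfl; simp at hxy; exact (pow_ne_zero _ ha) hxy.symm
    have hy : y ≠ 0 := by rintro rfl; simp at hxy; exact (pow_ne_zero _ ha) hxy.symm
    obtain ⟨s, hs, hsx⟩ := aux_dlog hF α hα (Units.mk0 x hx)
    obtain ⟨r, hr, hry⟩ := aux_dlog hF α hα (Units.mk0 y hy)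
    have hsx' : (α:F) ^ s = x := by
      have := congrArg Units.val hsx; simpa using this
    have hry' : (α:F) ^ r = y := by
      have := congrArg Units.val hry; simpa using this
    have hsr : (s + r) % (q-1) = (2*j+1) % (q-1) := by
      apply (aux_pow_iff hF α hα).mp
      rw [pow_add, hsx', hry', hxy]
    set m := (s + (q-1) - j) % (q-1) with hm_def
    set m' := (r + (q-1) - j) % (q-1) with hm'_def
    have hmlt : m < q - 1 := Nat.mod_lt _ (by omega)
    have hm'lt : m' < q - 1 := Nat.mod_lt _ (by omega)
    have em : (m + j) % (q-1) = s % (q-1) := by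
      have e1 : (m + j) ≡ (s + (q-1) - j) + j [MOD q-1] :=
        Nat.ModEq.add_right j (Nat.mod_mod_of_dvd _ dvd_rfl)
      have e2 : (s + (q-1) - j) + j = s + (q-1) := by omega
      have e3 : s + (q-1) ≡ s [MOD q-1] := Nat.add_mod_right s (q-1)
      exact e1.trans (by rw [e2]; exact e3)
    have em' : (m' + j) % (q-1) = r % (q-1) := by
      have e1 : (m' + j) ≡ (r + (q-1) - j) + j [MOD q-1] :=
        Nat.ModEq.add_right j (Nat.mod_mod_of_dvd _ dvd_rfl)
      have e2 : (r + (q-1) - j) + j = r + (q-1) := by omega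
      have e3 : r + (q-1) ≡ r [MOD q-1] := Nat.add_mod_right r (q-1)
      exact e1.trans (by rw [e2]; exact e3)
    have hams : (α:F) ^ (m+j) = x := by rw [(aux_pow_iff hF α hα).mpr em, hsx']
    have hams' : (α:F) ^ (m'+j) = y := by rw [(aux_pow_iff hF α hα).mpr em', hry']
    have hi2 : (α:F) ^ i = (α:F) ^ m + (α:F) ^ m' := by
      apply mul_left_cancel₀ (pow_ne_zero j ha)
      have : (α:F) ^ j * (α:F) ^ i = (α:F) ^ (i+j) := by rw [← pow_add, add_comm]
      rw [this, ← hsum, ← hams, ← hams', mul_add, ← pow_add, ← pow_add, add_comm j m,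
        add_comm j m']
    have hmm1 : (m + m') % (q-1) = 1 % (q-1) := by
      have e1 : (m + j) + (m' + j) ≡ s + r [MOD q-1] := Nat.ModEq.add em em'
      have e2 : (m + m') + 2*j ≡ (2*j+1) [MOD q-1] := by
        have : (m + j) + (m' + j) = (m + m') + 2*j := by ring
        rw [← this]; exact e1.trans hsr
      have e3 : (m + m') + 2*j ≡ 1 + 2*j [MOD q-1] := by
        rwa [show 2*j+1 = 1 + 2*j by ring] at e2
      exact Nat.ModEq.add_right_cancel' (2*j) e3
    rcases lt_trichotomy m m' with hlt | heq | hgt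
    · obtain ⟨k, hk, hke⟩ := aux_pair hF hq α hα hlt hm'lt hmm1
      exact ⟨hi, k, hk, hi2.trans hke.symm⟩
    · exfalso
      rw [heq, CharTwo.add_self_eq_zero] at hi2
      exact (pow_ne_zero i ha) hi2
    · obtain ⟨k, hk, hke⟩ := aux_pair hF hq α hα hgt hmlt (by rwa [add_comm] at hmm1)
      refine ⟨hi, k, hk, ?_⟩
      rw [hi2, add_comm, hke]
  · rintro ⟨-, k, hk, heq⟩
    have hkq : k ≤ q - 1 := by omega
    refine ⟨(α:F) ^ (j+(k+1)), (α:F) ^ (j+(q-1-k)), ?_, ?_⟩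
    · rw [← pow_add]
      apply (aux_pow_iff hF α hα).mpr
      have : j+(k+1) + (j+(q-1-k)) = (2*j+1) + (q-1) := by omega
      rw [this]
      exact Nat.add_mod_right _ _
    · rw [show i + j = j + i by ring, pow_add (α:F) j i, heq, mul_add, ← pow_add, ← pow_add]
lemma aux_count (hF : Fintype.card F = q) (hq : Even q) (α : Fˣ)
    (hα : ∀ x : Fˣ, x ∈ Subgroup.zpowers α) {j : ℕ} (hj : j < q - 1)
    {ρ : F} (hρ : ρ ^ 2 = (α:F) ^ (2*j+1)) :
    (Ifin q (α:F)).card = q / 2 := by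
  classical
  haveI hch : CharP F 2 := aux_char2 hF hq
  haveI : Fact (Nat.Prime 2) := ⟨Nat.prime_two⟩
  have h2 : (2 : F) = 0 := CharTwo.two_eq_zero
  have hq2 : 2 ≤ q := Fintype.one_lt_card.trans_eq hF
  have hqe : q % 2 = 0 := Nat.even_iff.mp hq
  have ha : (α : F) ≠ 0 := α.ne_zero
  set a : F := (α : F) with ha_def
  have hc : a ^ (2*j+1) ≠ 0 := pow_ne_zero _ ha
  set c : F := a ^ (2*j+1) with hc_def
  have hρ0 : ρ ≠ 0 := fun h => hc (by rw [← hρ, h]; ring)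
  have hsqinj : ∀ u v : F, u * u = v * v → u = v := by
    intro u v h
    apply frobenius_inj F 2
    rwa [frobenius_def, frobenius_def, pow_two, pow_two]
  have hsq : ∀ u : F, u * u = c ↔ u = ρ := by
    intro u
    constructor
    · intro h; exact hsqinj u ρ (by rw [h, ← hρ, pow_two])
    · rintro rfl; rw [← pow_two, hρ]
  set S : Finset F := Finset.univ \ {0, ρ} with hS_def
  have hmemS : ∀ u : F, u ∈ S ↔ u ≠ 0 ∧ u * u ≠ c := by
    intro u
    simp only [hS_def, Finset.mem_sdiff, Finset.mem_univ, true_and, Finset.mem_insert,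
      Finset.mem_singleton, not_or]
    simp only [ne_eq, ← hsq u]
  have hcardS : S.card = q - 2 := by
    rw [hS_def, Finset.card_sdiff_of_subset (by simp), Finset.card_univ, hF,
      Finset.card_pair (Ne.symm hρ0)]
  set T : Finset F := S.image (fun u => u + c * u⁻¹) with hT_def
  -- an element of S with image t satisfies the quadratic
  have hquad : ∀ u : F, u ≠ 0 → ∀ t : F, u + c * u⁻¹ = t → u * u + c = t * u := by
    intro u hu t htu
    field_simp at htu
    linear_combination htu
  have hmemT : ∀ t : F, t ∈ T ↔ (t ≠ 0 ∧ ∃ x y : F, x * y = c ∧ x + y = t) := by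
    intro t
    constructor
    · intro ht
      obtain ⟨u, hu, hut⟩ := Finset.mem_image.mp ht
      obtain ⟨hu0, huc⟩ := (hmemS u).mp hu
      have hcu : u * (c * u⁻¹) = c := by
        rw [mul_comm c u⁻¹, ← mul_assoc, mul_inv_cancel₀ hu0, one_mul]
      have ht0 : t ≠ 0 := by
        intro h0
        apply huc
        have hqd := hquad u hu0 t hut
        rw [h0, zero_mul] at hqd
        linear_combination hqd - c * h2 + (0:F)
      exact ⟨ht0, u, c * u⁻¹, hcu, hut⟩
    · rintro ⟨ht0, x, y, hxy, hsum⟩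
      have hx0 : x ≠ 0 := by rintro rfl; rw [zero_mul] at hxy; exact hc hxy.symm
      have hyy : y = c * x⁻¹ := by
        rw [← hxy, mul_comm x y, mul_assoc, mul_inv_cancel₀ hx0, mul_one]
      have hxc : x * x ≠ c := by
        intro h
        have hyx : y = x := by
          rw [hyy, ← h, mul_assoc, mul_inv_cancel₀ hx0, mul_one]
        rw [hyx, CharTwo.add_self_eq_zero] at hsum
        exact ht0 hsum.symm
      apply Finset.mem_image.mpr
      exact ⟨x, (hmemS x).mpr ⟨hx0, hxc⟩, by rw [← hyy, hsum]⟩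
  have hfiber : ∀ t ∈ T, (S.filter (fun u => u + c * u⁻¹ = t)).card = 2 := by
    intro t ht
    obtain ⟨u₀, hu₀, hu₀t⟩ := Finset.mem_image.mp ht
    obtain ⟨h00, h0c⟩ := (hmemS u₀).mp hu₀
    set w : F := c * u₀⁻¹ with hw_def
    have hw0 : w ≠ 0 := mul_ne_zero hc (inv_ne_zero h00)
    have huw : u₀ * w = c := by
      rw [hw_def, mul_comm c u₀⁻¹, ← mul_assoc, mul_inv_cancel₀ h00, one_mul]
    have hne : u₀ ≠ w := by
      intro h
      exact h0c (by rw [← huw, ← h])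
    have hwS : w ∈ S := by
      apply (hmemS w).mpr
      refine ⟨hw0, ?_⟩
      intro h
      apply h0c
      have : u₀ * w = w * w := by rw [huw, h]
      have := mul_right_cancel₀ hw0 this
      rw [this, h, ← huw, this]
    have hwt : w + c * w⁻¹ = t := by
      have hcw : c * w⁻¹ = u₀ := by
        rw [← huw, mul_assoc, mul_inv_cancel₀ hw0, mul_one]
      rw [hcw, add_comm]
      exact hu₀t
    have hset : S.filter (fun u => u + c * u⁻¹ = t) = {u₀, w} := by
      ext v
      simp only [Finset.mem_filter, Finset.mem_insert, Finset.mem_singleton]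
      constructor
      · rintro ⟨hvS, hvt⟩
        obtain ⟨hv0, hvc⟩ := (hmemS v).mp hvS
        have hq1 := hquad v hv0 t hvt
        have key : (v + u₀) * (v + w) = 0 := by
          linear_combination hq1 + v * hu₀t + huw + (t * v) * h2
        rcases mul_eq_zero.mp key with h | h
        · left
          have := eq_neg_of_add_eq_zero_left h
          rwa [CharTwo.neg_eq] at this
        · right
          have := eq_neg_of_add_eq_zero_left h
          rwa [CharTwo.neg_eq] at this
      · rintro (rfl | rfl)
        · exact ⟨hu₀, hu₀t⟩
        · exact ⟨hwS, hwt⟩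
    rw [hset, Finset.card_pair hne]
  have hcardT : S.card = T.card * 2 := by
    rw [Finset.card_eq_sum_card_fiberwise (f := fun u => u + c * u⁻¹) (t := T)
      (fun u hu => Finset.mem_image_of_mem _ hu)]
    rw [Finset.sum_congr rfl hfiber, Finset.sum_const, smul_eq_mul]
  have hcardT' : T.card = q / 2 - 1 := by omega
  -- bijection between R ∩ [0, q-1) and T
  have hRT : ((Finset.range (q-1)).filter (· ∈ Rset q a)).card = T.card := by
    apply Finset.card_bij (fun i _ => a ^ (i + j))
    · intro i hi
      rw [Finset.mem_filter, Finset.mem_range] at hi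
      obtain ⟨x, y, hxy, hsum⟩ := (aux_E hF hq α hα hj hi.1).mpr hi.2
      exact (hmemT _).mpr ⟨pow_ne_zero _ ha, x, y, hxy, hsum⟩
    · intro i hi i' hi' hii
      rw [Finset.mem_filter, Finset.mem_range] at hi hi'
      have := (aux_pow_iff hF α hα).mp hii
      have := Nat.ModEq.add_right_cancel' j this
      exact Nat.ModEq.eq_of_lt_of_lt this hi.1 hi'.1
    · intro t ht
      obtain ⟨ht0, x, y, hxy, hsum⟩ := (hmemT t).mp ht
      obtain ⟨s, hs, hst⟩ := aux_dlog hF α hα (Units.mk0 t ht0)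
      have hst' : a ^ s = t := by
        have := congrArg Units.val hst; simpa using this
      refine ⟨(s + (q-1) - j) % (q-1), ?_, ?_⟩
      · rw [Finset.mem_filter, Finset.mem_range]
        have hilt : (s + (q-1) - j) % (q-1) < q - 1 := Nat.mod_lt _ (by omega)
        have hajs : a ^ ((s + (q-1) - j) % (q-1) + j) = t := by
          rw [← hst']
          apply (aux_pow_iff hF α hα).mpr
          have e1 : ((s + (q-1) - j) % (q-1) + j) ≡ (s + (q-1) - j) + j [MOD q-1] :=
            Nat.ModEq.add_right j (Nat.mod_mod_of_dvd _ dvd_rfl)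
          have e2 : (s + (q-1) - j) + j = s + (q-1) := by omega
          have e3 : s + (q-1) ≡ s [MOD q-1] := Nat.add_mod_right s (q-1)
          exact e1.trans (by rw [e2]; exact e3)
        refine ⟨hilt, (aux_E hF hq α hα hj hilt).mp ⟨x, y, hxy, ?_⟩⟩
        rw [hajs, hsum]
      · rw [← hst']
        apply (aux_pow_iff hF α hα).mpr
        have e1 : ((s + (q-1) - j) % (q-1) + j) ≡ (s + (q-1) - j) + j [MOD q-1] :=
          Nat.ModEq.add_right j (Nat.mod_mod_of_dvd _ dvd_rfl)
        have e2 : (s + (q-1) - j) + j = s + (q-1) := by omega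
        have e3 : s + (q-1) ≡ s [MOD q-1] := Nat.add_mod_right s (q-1)
        exact e1.trans (by rw [e2]; exact e3)
  have hIfin_eq : Ifin q a = Finset.range (q-1) \
      (Finset.range (q-1)).filter (· ∈ Rset q a) := by
    ext i
    simp only [Ifin, Iset, Finset.mem_filter, Finset.mem_sdiff, Finset.mem_range,
      Set.mem_diff, Set.mem_setOf_eq]
    tauto
  rw [hIfin_eq, Finset.card_sdiff_of_subset (Finset.filter_subset _ _), Finset.card_range, hRT,
    hcardT']
  omega
lemma aux_monic {t c : F} : (X ^ 2 + C t * X + C c : F[X]).Monic := by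
  rw [add_assoc]
  refine Polynomial.monic_X_pow_add (lt_of_le_of_lt Polynomial.degree_linear_le ?_)
  exact_mod_cast one_lt_two

lemma aux_natDegree {t c : F} : (X ^ 2 + C t * X + C c : F[X]).natDegree = 2 := by
  compute_degree!

lemma aux_coeff0 {t c : F} : (X ^ 2 + C t * X + C c : F[X]).coeff 0 = c := by
  simp [coeff_X_pow]

lemma aux_coeff1 {t c : F} : (X ^ 2 + C t * X + C c : F[X]).coeff 1 = t := by
  simp [coeff_X_pow]

lemma aux_mem_Ifin {q : ℕ} {α : F} {i : ℕ} :
    i ∈ Ifin q α ↔ i < q - 1 ∧ i ∉ Rset q α := by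
  classical
  simp only [Ifin, Iset, Finset.mem_filter, Finset.mem_range, Set.mem_diff,
    Set.mem_setOf_eq]
  tauto

lemma aux_irred (hF : Fintype.card F = q) (hq : Even q) (α : Fˣ)
    (hα : ∀ x : Fˣ, x ∈ Subgroup.zpowers α) {j : ℕ} (hj : j < q - 1)
    {i : ℕ} (hi : i ∈ Ifin q (α:F)) :
    Irreducible (X ^ 2 + C ((α:F) ^ (i+j)) * X + C ((α:F) ^ (2*j+1)) : F[X]) := by
  obtain ⟨hilt, hiR⟩ := aux_mem_Ifin.mp hi
  by_contra hirr
  obtain ⟨c₁, c₂, h0, h1⟩ :=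
    (aux_monic.not_irreducible_iff_exists_add_mul_eq_coeff aux_natDegree).mp hirr
  rw [aux_coeff0] at h0
  rw [aux_coeff1] at h1
  exact hiR ((aux_E hF hq α hα hj hilt).mp ⟨c₁, c₂, h0.symm, h1.symm⟩)

/-- An irreducible monic quadratic `X² + tX + c` over a finite field of even
order `q` divides `X^(q+1) + c`. -/
lemma aux_dvd (hF : Fintype.card F = q) (hq : Even q) (t c : F)
    (hirr : Irreducible (X ^ 2 + C t * X + C c : F[X])) :
    (X ^ 2 + C t * X + C c : F[X]) ∣ X ^ (q + 1) + C c := by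
  classical
  haveI hch : CharP F 2 := aux_char2 hF hq
  haveI : Fact (Nat.Prime 2) := ⟨Nat.prime_two⟩
  have h2F : (2 : F) = 0 := CharTwo.two_eq_zero
  have hq2 : 2 ≤ q := Fintype.one_lt_card.trans_eq hF
  haveI hQirr : Fact (Irreducible (X ^ 2 + C t * X + C c : F[X])) := ⟨hirr⟩
  obtain ⟨n, hn0, hn⟩ := aux_qpow hF hq
  set K := AdjoinRoot (X ^ 2 + C t * X + C c : F[X]) with hK_def
  haveI : CharP K 2 := charP_of_injective_algebraMap (algebraMap F K).injective 2
  haveI : ExpChar K 2 := ExpChar.prime Nat.prime_two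
  have h2K : (2 : K) = 0 := CharTwo.two_eq_zero
  set r : K := AdjoinRoot.root (X ^ 2 + C t * X + C c : F[X]) with hr_def
  set t' : K := algebraMap F K t with ht'_def
  set c' : K := algebraMap F K c with hc'_def
  have hr : r ^ 2 + t' * r + c' = 0 := by
    have h0 : (Polynomial.aeval r) (X ^ 2 + C t * X + C c : F[X]) = 0 := by
      rw [hr_def, AdjoinRoot.aeval_eq, AdjoinRoot.mk_self]
    simpa [ht'_def, hc'_def] using h0
  have hpowq : ∀ z : K, z ^ q = iterateFrobenius K 2 n z := by
    intro z; rw [iterateFrobenius_def, hn]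
  have hfix : ∀ u : F, (algebraMap F K u) ^ q = algebraMap F K u := by
    intro u
    rw [← map_pow]
    congr 1
    rw [← hF]
    exact FiniteField.pow_card u
  have hfixt : t' ^ q = t' := ht'_def ▸ hfix t
  have hfixc : c' ^ q = c' := hc'_def ▸ hfix c
  have hrq : (r ^ q) ^ 2 + t' * r ^ q + c' = 0 := by
    have h := congrArg (iterateFrobenius K 2 n) hr
    simp only [map_add, map_mul, map_pow, map_zero] at h
    rw [← hpowq r, ← hpowq t', ← hpowq c', hfixt, hfixc] at h
    exact h
  have hdich : r ^ q = r ∨ r ^ q = r + t' := by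
    have key : (r ^ q + r) * (r ^ q + (r + t')) = 0 := by
      linear_combination hrq + hr + (r * r ^ q - c') * h2K
    rcases mul_eq_zero.mp key with h | h
    · left
      have := eq_neg_of_add_eq_zero_left h
      rwa [CharTwo.neg_eq] at this
    · right
      have := eq_neg_of_add_eq_zero_left h
      rwa [CharTwo.neg_eq] at this
  rcases hdich with hcase | hcase
  · -- impossible: r would lie in the base field, so the quadratic has a root
    exfalso
    have hrs : r ∈ (Finset.univ : Finset F).image (algebraMap F K) := by
      by_contra hnot
      have hPdeg : (X ^ q - X : K[X]).natDegree = q := by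
        compute_degree!
        · rw [if_neg (show ¬ 1 = q by omega)]
          norm_num
        · omega
      have hPne : (X ^ q - X : K[X]) ≠ 0 := fun h => by
        rw [h, natDegree_zero] at hPdeg; omega
      have hroots : ∀ z : K, z ^ q = z → z ∈ (X ^ q - X : K[X]).roots := by
        intro z hz
        rw [mem_roots hPne]
        simp [IsRoot, hz]
      have hsub : insert r ((Finset.univ : Finset F).image (algebraMap F K)) ⊆
          (X ^ q - X : K[X]).roots.toFinset := by
        intro z hz
        rw [Multiset.mem_toFinset]
        rcases Finset.mem_insert.mp hz with rfl | hz'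
        · exact hroots _ hcase
        · obtain ⟨u, -, rfl⟩ := Finset.mem_image.mp hz'
          exact hroots _ (hfix u)
      have hcard : q + 1 ≤ q := by
        calc q + 1 = (insert r ((Finset.univ : Finset F).image (algebraMap F K))).card := by
              rw [Finset.card_insert_of_notMem hnot,
                Finset.card_image_of_injective _ (algebraMap F K).injective,
                Finset.card_univ, hF]
          _ ≤ (X ^ q - X : K[X]).roots.toFinset.card := Finset.card_le_card hsub
          _ ≤ Multiset.card (X ^ q - X : K[X]).roots :=
              (X ^ q - X : K[X]).roots.toFinset_card_le
          _ ≤ (X ^ q - X : K[X]).natDegree := (X ^ q - X : K[X]).card_roots'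
          _ = q := hPdeg
      omega
    obtain ⟨u, -, hu⟩ := Finset.mem_image.mp hrs
    have hmap : algebraMap F K (u ^ 2 + t * u + c) = 0 := by
      rw [map_add, map_add, map_pow, map_mul, hu]
      exact hr
    have huF : u ^ 2 + t * u + c = 0 := by
      apply (algebraMap F K).injective
      rwa [map_zero]
    obtain ⟨c₁, c₂, h0, h1⟩ : ∃ c₁ c₂ : F,
        (X ^ 2 + C t * X + C c : F[X]).coeff 0 = c₁ * c₂ ∧
        (X ^ 2 + C t * X + C c : F[X]).coeff 1 = c₁ + c₂ := by
      refine ⟨u, t + u, ?_, ?_⟩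
      · rw [aux_coeff0]
        linear_combination -huF + c * h2F
      · rw [aux_coeff1]
        linear_combination -u * h2F
    exact (aux_monic.not_irreducible_iff_exists_add_mul_eq_coeff aux_natDegree).mpr
      ⟨c₁, c₂, h0, h1⟩ hirr
  · have hfin : r ^ (q + 1) + c' = 0 := by
      have e : r ^ (q + 1) = r ^ q * r := pow_succ r q
      rw [e, hcase]
      linear_combination hr
    rw [← AdjoinRoot.mk_eq_zero, ← AdjoinRoot.aeval_eq]
    rw [map_add, aeval_X_pow, aeval_C]
    exact hfin

theorem stmt_5 (q : ℕ) (F : Type) [Field F] [Fintype F] (hF : Fintype.card F = q)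
    (hq : Even q) (α : Fˣ) (hα : ∀ x : Fˣ, x ∈ Subgroup.zpowers α)
    (j : ℕ) (hj : j < q - 1)
    (ρ : F) (hρ : ρ ^ 2 = (α : F) ^ (2 * j + 1)) :
    (X ^ (q + 1) + C ((α : F) ^ (2 * j + 1)) : F[X]) =
      (X + C ρ) *
        ∏ i ∈ Ifin q (α : F),
          (X ^ 2 + C ((α : F) ^ (i + j)) * X + C ((α : F) ^ (2 * j + 1))) ∧
    Irreducible (X + C ρ : F[X]) ∧
    ∀ i ∈ Ifin q (α : F),
      Irreducible (X ^ 2 + C ((α : F) ^ (i + j)) * X + C ((α : F) ^ (2 * j + 1)) : F[X]) := by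
  classical
  haveI hch : CharP F 2 := aux_char2 hF hq
  have hq2 : 2 ≤ q := Fintype.one_lt_card.trans_eq hF
  have hqe : q % 2 = 0 := Nat.even_iff.mp hq
  have hlin_irr : Irreducible (X + C ρ : F[X]) := by
    have e : (X + C ρ : F[X]) = X - C (-ρ) := by rw [map_neg, sub_neg_eq_add]
    rw [e]; exact irreducible_X_sub_C (-ρ)
  refine ⟨?_, hlin_irr, fun i hi => aux_irred hF hq α hα hj hi⟩
  have hdvd_quad : ∀ i ∈ Ifin q (α : F),
      (X ^ 2 + C ((α:F) ^ (i+j)) * X + C ((α:F) ^ (2*j+1)) : F[X]) ∣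
        X ^ (q + 1) + C ((α:F) ^ (2*j+1)) :=
    fun i hi => aux_dvd hF hq _ _ (aux_irred hF hq α hα hj hi)
  have hρq : ρ ^ (q + 1) = ρ ^ 2 := by
    have h1 : ρ ^ q = ρ := by rw [← hF]; exact FiniteField.pow_card ρ
    rw [pow_succ, h1, pow_two]
  have hdvd_lin : (X + C ρ : F[X]) ∣ X ^ (q + 1) + C ((α:F) ^ (2*j+1)) := by
    have e : (X + C ρ : F[X]) = X - C ρ := by
      rw [sub_eq_add_neg, CharTwo.neg_eq]
    rw [e, dvd_iff_isRoot, IsRoot, eval_add, eval_pow, eval_X, eval_C, hρq, hρ,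
      CharTwo.add_self_eq_zero]
  have hQne : ∀ i ∈ Ifin q (α : F), ∀ i' ∈ Ifin q (α : F), i ≠ i' →
      (X ^ 2 + C ((α:F) ^ (i+j)) * X + C ((α:F) ^ (2*j+1)) : F[X]) ≠
      (X ^ 2 + C ((α:F) ^ (i'+j)) * X + C ((α:F) ^ (2*j+1)) : F[X]) := by
    intro i hi i' hi' hne heq
    apply hne
    have h1 := congrArg (fun P : F[X] => P.coeff 1) heq
    simp only [aux_coeff1] at h1
    have h2 := (aux_pow_iff hF α hα).mp h1
    have h3 := Nat.ModEq.add_right_cancel' j h2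
    exact Nat.ModEq.eq_of_lt_of_lt h3 (aux_mem_Ifin.mp hi).1 (aux_mem_Ifin.mp hi').1
  have hpair : Set.Pairwise ↑(Ifin q (α : F))
      (Function.onFun IsCoprime (fun i : ℕ =>
        (X ^ 2 + C ((α:F) ^ (i+j)) * X + C ((α:F) ^ (2*j+1)) : F[X]))) := by
    intro i hi i' hi' hne
    simp only [Function.onFun]
    apply (aux_irred hF hq α hα hj (Finset.mem_coe.mp hi)).coprime_iff_not_dvd.mpr
    intro hdvd
    exact hQne i (Finset.mem_coe.mp hi) i' (Finset.mem_coe.mp hi') hne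
      (eq_of_monic_of_associated aux_monic aux_monic
        ((aux_irred hF hq α hα hj (Finset.mem_coe.mp hi)).associated_of_dvd
          (aux_irred hF hq α hα hj (Finset.mem_coe.mp hi')) hdvd))
  have hprod_dvd : (∏ i ∈ Ifin q (α : F),
      (X ^ 2 + C ((α:F) ^ (i+j)) * X + C ((α:F) ^ (2*j+1)) : F[X])) ∣
        X ^ (q + 1) + C ((α:F) ^ (2*j+1)) :=
    Finset.prod_dvd_of_coprime hpair hdvd_quad
  have hcop_lin : IsCoprime (X + C ρ : F[X]) (∏ i ∈ Ifin q (α : F),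
      (X ^ 2 + C ((α:F) ^ (i+j)) * X + C ((α:F) ^ (2*j+1)) : F[X])) := by
    apply IsCoprime.prod_right
    intro i hi
    apply IsCoprime.symm
    apply (aux_irred hF hq α hα hj hi).coprime_iff_not_dvd.mpr
    intro hdvd
    have h1 := natDegree_le_of_dvd hdvd (X_add_C_ne_zero ρ)
    rw [aux_natDegree, natDegree_X_add_C] at h1
    omega
  have hRHS_dvd : (X + C ρ) * (∏ i ∈ Ifin q (α : F),
      (X ^ 2 + C ((α:F) ^ (i+j)) * X + C ((α:F) ^ (2*j+1)) : F[X])) ∣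
        X ^ (q + 1) + C ((α:F) ^ (2*j+1)) :=
    hcop_lin.mul_dvd hdvd_lin hprod_dvd
  have hcard := aux_count hF hq α hα hj hρ
  have hmonic_prod : (∏ i ∈ Ifin q (α : F),
      (X ^ 2 + C ((α:F) ^ (i+j)) * X + C ((α:F) ^ (2*j+1)) : F[X])).Monic :=
    monic_prod_of_monic _ _ (fun i _ => aux_monic)
  have hmonic_RHS : ((X + C ρ) * ∏ i ∈ Ifin q (α : F),
      (X ^ 2 + C ((α:F) ^ (i+j)) * X + C ((α:F) ^ (2*j+1)) : F[X])).Monic :=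
    (monic_X_add_C ρ).mul hmonic_prod
  have hmonic_LHS : (X ^ (q + 1) + C ((α:F) ^ (2*j+1)) : F[X]).Monic :=
    monic_X_pow_add (lt_of_le_of_lt degree_C_le (by exact_mod_cast q.succ_pos))
  have hdegL : (X ^ (q + 1) + C ((α:F) ^ (2*j+1)) : F[X]).natDegree = q + 1 :=
    natDegree_X_pow_add_C
  have hdegR : ((X + C ρ) * ∏ i ∈ Ifin q (α : F),
      (X ^ 2 + C ((α:F) ^ (i+j)) * X + C ((α:F) ^ (2*j+1)) : F[X])).natDegree = q + 1 := by
    rw [natDegree_mul (X_add_C_ne_zero ρ) hmonic_prod.ne_zero, natDegree_X_add_C,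
      natDegree_prod _ _ (fun i _ => aux_monic.ne_zero)]
    rw [Finset.sum_congr rfl (fun i _ => aux_natDegree), Finset.sum_const, smul_eq_mul,
      hcard]
    omega
  exact (eq_of_dvd_of_natDegree_le_of_leadingCoeff hRHS_dvd
    (le_of_eq (hdegL.trans hdegR.symm))
    (by rw [hmonic_RHS.leadingCoeff, hmonic_LHS.leadingCoeff])).symm
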